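/- Let Γ be an infinite set, let X be a Banach space, and let T : c₀(Γ) → X be a bounded linear operator such that δ := inf_{γ∈Γ} ‖T e_γ‖ > 0. Then for every η ∈ (0, δ) there is a subset Γ' of Γ of the same cardinality as Γ such that ‖T x‖ ≥ η·‖x‖ for every x in the closed linear span of {e_γ : γ ∈ Γ'}. -/

import Mathlib

open scoped ENNReal ZeroAtInfty
open Filter
open scoped Classical

section Comb
open Set

lemma my_tsum_mono {Γ : Type*} (f : Γ → ℝ≥0∞) {S S' : Set Γ} (h : S ⊆ S') :
    ∑' γ : S, f γ ≤ ∑' γ : S', f γ := by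
  rw [tsum_subtype, tsum_subtype]
  exact ENNReal.tsum_le_tsum fun γ => Set.indicator_le_indicator_of_subset h (fun _ => zero_le) γ

lemma my_tsum_union {Γ : Type*} (f : Γ → ℝ≥0∞) {S S' : Set Γ} (h : Disjoint S S') :
    ∑' γ : (S ∪ S' : Set Γ), f γ = (∑' γ : S, f γ) + ∑' γ : S', f γ :=
  ENNReal.summable.tsum_union_disjoint h ENNReal.summable

lemma comb {Γ : Type*} [Infinite Γ] (a : Γ → Γ → ℝ≥0∞) (ε : ℝ≥0∞) (hε : ε ≠ ⊤) :
    ∀ (k : ℕ) (B : Set Γ), Cardinal.mk B = Cardinal.mk Γ →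
    (∀ γ ∈ B, ∑' γ' : (B \ {γ} : Set Γ), a γ γ' ≤ k * ε) →
    ∃ C ⊆ B, Cardinal.mk C = Cardinal.mk Γ ∧
      ∀ γ ∈ C, ∑' γ' : (C \ {γ} : Set Γ), a γ γ' ≤ ε := by
  intro k
  induction k with
  | zero =>
    intro B hB hb
    refine ⟨B, subset_rfl, hB, fun γ hγ => le_trans (hb γ hγ) (by simp)⟩
  | succ k ih =>
    intro B hB hb
    obtain ⟨e⟩ : Nonempty (Γ × Γ ≃ B) := by
      rw [← Cardinal.eq, hB, Cardinal.mk_prod]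
      simp only [Cardinal.lift_id]
      exact Cardinal.mul_eq_self (Cardinal.aleph0_le_mk Γ)
    set D : Γ → Set Γ := fun j => Set.range (fun i => (e (j, i) : Γ)) with hD
    have hDsub : ∀ j, D j ⊆ B := by
      rintro j _ ⟨i, rfl⟩; exact (e (j, i)).2
    have hDdisj : ∀ j j', j ≠ j' → Disjoint (D j) (D j') := by
      rintro j j' hne
      rw [Set.disjoint_left]
      rintro _ ⟨i, rfl⟩ ⟨i', hi'⟩
      have : e (j', i') = e (j, i) := Subtype.coe_injective hi'
      exact hne (congrArg Prod.fst (e.injective this)).symm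
    set G : Γ → Set Γ := fun j => {γ ∈ D j | ∑' γ' : (D j \ {γ} : Set Γ), a γ γ' ≤ ε} with hG
    by_cases hcase : ∃ j, Cardinal.mk (G j) = Cardinal.mk Γ
    · obtain ⟨j, hj⟩ := hcase
      refine ⟨G j, fun γ hγ => hDsub j hγ.1, hj, fun γ hγ => ?_⟩
      exact le_trans (my_tsum_mono _ (Set.diff_subset_diff_left (fun x hx => hx.1))) hγ.2
    · push_neg at hcase
      have hbad : ∀ j, ∃ γ, γ ∈ D j ∧ γ ∉ G j := by
        intro j
        by_contra h
        push_neg at h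
        have hsub : D j ⊆ G j := fun γ hγ => h γ hγ
        have h1 : Cardinal.mk (D j) = Cardinal.mk Γ := by
          rw [hD]
          exact Cardinal.mk_range_eq _ (fun i i' hii => by
            have := e.injective (Subtype.coe_injective hii)
            exact (Prod.mk.injEq _ _ _ _).mp this |>.2)
        exact hcase j (le_antisymm (Cardinal.mk_set_le _)
          (h1 ▸ Cardinal.mk_le_mk_of_subset hsub))
      choose n hn hn' using hbad
      have hninj : Function.Injective n := by
        intro j j' hjj
        by_contra hne
        exact (Set.disjoint_left.mp (hDdisj j j' hne) (hn j)) (hjj ▸ hn j')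
      set B' : Set Γ := Set.range n with hB'
      have hB'sub : B' ⊆ B := by rintro _ ⟨j, rfl⟩; exact hDsub j (hn j)
      have hB'card : Cardinal.mk B' = Cardinal.mk Γ := Cardinal.mk_range_eq _ hninj
      suffices h : ∀ γ ∈ B', ∑' γ' : (B' \ {γ} : Set Γ), a γ γ' ≤ k * ε by
        obtain ⟨C, hC1, hC2, hC3⟩ := ih B' hB'card h
        exact ⟨C, hC1.trans hB'sub, hC2, hC3⟩
      rintro _ ⟨j, rfl⟩
      have hdisj : Disjoint (B' \ {n j}) (D j \ {n j}) := by
        rw [Set.disjoint_left]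
        rintro x ⟨⟨j', rfl⟩, hx2⟩ ⟨hx3, _⟩
        have : j' = j := by
          by_contra hne
          exact (Set.disjoint_left.mp (hDdisj j' j hne) (hn j')) hx3
        exact hx2 (by rw [this]; exact rfl)
      have hsum : (∑' γ' : (B' \ {n j} : Set Γ), a (n j) γ')
          + ∑' γ' : (D j \ {n j} : Set Γ), a (n j) γ'
          ≤ (k + 1 : ℕ) * ε := by
        rw [← my_tsum_union _ hdisj]
        refine le_trans (my_tsum_mono _ ?_) (hb (n j) (hB'sub ⟨j, rfl⟩))
        exact Set.union_subset (Set.diff_subset_diff_left hB'sub)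
          (Set.diff_subset_diff_left (hDsub j))
      have hgt : ε < ∑' γ' : (D j \ {n j} : Set Γ), a (n j) γ' := by
        have := hn' j
        rw [hG] at this
        simp only [Set.mem_setOf_eq, hn j, true_and, not_le] at this
        exact this
      have hfin : (∑' γ' : (B' \ {n j} : Set Γ), a (n j) γ') + ε ≤ (k : ℝ≥0∞) * ε + ε := by
        calc (∑' γ' : (B' \ {n j} : Set Γ), a (n j) γ') + ε
            ≤ (∑' γ' : (B' \ {n j} : Set Γ), a (n j) γ')
              + ∑' γ' : (D j \ {n j} : Set Γ), a (n j) γ' := add_le_add_right hgt.le _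
          _ ≤ (k + 1 : ℕ) * ε := hsum
          _ = (k : ℝ≥0∞) * ε + ε := by push_cast; ring
      exact (ENNReal.add_le_add_iff_right hε).mp hfin

end Comb

/-- The standard unit vector `e_γ` of `c₀(Γ) = C₀(Γ, 𝕜)` for a discrete space `Γ`. -/
noncomputable def stdUnitVector (𝕜 : Type*) [RCLike 𝕜] {Γ : Type*} [TopologicalSpace Γ]
    [DiscreteTopology Γ] (γ : Γ) : C₀(Γ, 𝕜) :=
  { toFun := ({γ} : Set Γ).indicator fun _ => 1
    continuous_toFun := continuous_of_discreteTopology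
    zero_at_infty' := by
      have h : ({γ} : Set Γ).indicator (fun _ => (1 : 𝕜)) =ᶠ[Filter.cocompact Γ]
          fun _ => (0 : 𝕜) := by
        rw [Filter.cocompact_eq_cofinite]
        filter_upwards [(Set.finite_singleton γ).eventually_cofinite_notMem] with m hm
        exact Set.indicator_of_notMem hm _
      exact Filter.Tendsto.congr' h.symm tendsto_const_nhds }

section C0

variable {𝕜 : Type*} [RCLike 𝕜] {Γ : Type*} [TopologicalSpace Γ] [DiscreteTopology Γ]

lemma stdUnitVector_apply (γ β : Γ) :
    stdUnitVector 𝕜 γ β = if β = γ then 1 else 0 := by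
  simp [stdUnitVector, Set.indicator, ZeroAtInftyContinuousMap.coe_mk, Pi.single_apply]

omit [DiscreteTopology Γ] in
lemma c0_norm_le (f : C₀(Γ, 𝕜)) {C : ℝ} (hC : 0 ≤ C) (h : ∀ β, ‖f β‖ ≤ C) : ‖f‖ ≤ C := by
  rw [← ZeroAtInftyContinuousMap.norm_toBCF_eq_norm]
  exact (BoundedContinuousFunction.norm_le hC).mpr h

omit [DiscreteTopology Γ] in
lemma c0_apply_le_norm (f : C₀(Γ, 𝕜)) (β : Γ) : ‖f β‖ ≤ ‖f‖ := by
  rw [← ZeroAtInftyContinuousMap.norm_toBCF_eq_norm]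
  exact f.toBCF.norm_coe_le_norm β

lemma sum_apply' (F : Finset Γ) (c : Γ → 𝕜) (β : Γ) :
    (∑ γ ∈ F, c γ • stdUnitVector 𝕜 γ) β = if β ∈ F then c β else 0 := by
  induction F using Finset.induction with
  | empty => simp
  | @insert γ F h ih =>
    rw [Finset.sum_insert h]
    simp only [ZeroAtInftyContinuousMap.coe_add, ZeroAtInftyContinuousMap.coe_smul, Pi.add_apply,
      Pi.smul_apply, ih, stdUnitVector_apply, Finset.mem_insert, smul_eq_mul]
    by_cases h1 : β = γ
    · subst h1
      simp [h]
    · simp [h1]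

lemma l1_bound (g : C₀(Γ, 𝕜) →L[𝕜] 𝕜) (F : Finset Γ) :
    ∑ γ ∈ F, ‖g (stdUnitVector 𝕜 γ)‖ ≤ ‖g‖ := by
  set u : Γ → 𝕜 := fun γ => g (stdUnitVector 𝕜 γ) with hu
  set c : Γ → 𝕜 := fun γ => if u γ = 0 then 1 else (‖u γ‖ : 𝕜) / u γ with hc
  have hc1 : ∀ γ, ‖c γ‖ = 1 := by
    intro γ
    by_cases h : u γ = 0
    · simp [hc, h]
    · simp only [hc, if_neg h, norm_div, RCLike.norm_ofReal, abs_norm]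
      exact div_self (norm_ne_zero_iff.mpr h)
  have hcu : ∀ γ, c γ * u γ = (‖u γ‖ : 𝕜) := by
    intro γ
    by_cases h : u γ = 0
    · simp [hc, h]
    · simp only [hc, if_neg h]
      exact div_mul_cancel₀ _ h
  set x : C₀(Γ, 𝕜) := ∑ γ ∈ F, c γ • stdUnitVector 𝕜 γ with hx
  have hxnorm : ‖x‖ ≤ 1 := by
    refine c0_norm_le x zero_le_one fun β => ?_
    rw [hx, sum_apply']
    split
    · rw [hc1]
    · simp
  have hgx : g x = ((∑ γ ∈ F, ‖u γ‖ : ℝ) : 𝕜) := by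
    rw [hx, map_sum]
    simp only [map_smul, smul_eq_mul]
    rw [RCLike.ofReal_sum]
    exact Finset.sum_congr rfl fun γ _ => hcu γ
  calc ∑ γ ∈ F, ‖u γ‖ = ‖g x‖ := by
        rw [hgx, RCLike.norm_ofReal, abs_of_nonneg (Finset.sum_nonneg fun γ _ => norm_nonneg _)]
    _ ≤ ‖g‖ * ‖x‖ := g.le_opNorm x
    _ ≤ ‖g‖ := by nlinarith [norm_nonneg g, norm_nonneg x]

end C0

theorem statement11 {𝕜 : Type*} [RCLike 𝕜] {Γ : Type*} [TopologicalSpace Γ]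
    [DiscreteTopology Γ] [Infinite Γ]
    {X : Type*} [NormedAddCommGroup X] [NormedSpace 𝕜 X] [CompleteSpace X]
    (T : C₀(Γ, 𝕜) →L[𝕜] X)
    (hδ : 0 < ⨅ γ : Γ, ‖T (stdUnitVector 𝕜 γ)‖) :
    ∀ η : ℝ, 0 < η → η < ⨅ γ : Γ, ‖T (stdUnitVector 𝕜 γ)‖ →
      ∃ Γ' : Set Γ, Cardinal.mk Γ' = Cardinal.mk Γ ∧
        ∀ x ∈ (Submodule.span 𝕜
            ((fun γ : Γ => stdUnitVector 𝕜 γ) '' Γ')).topologicalClosure,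
          η * ‖x‖ ≤ ‖T x‖ := by
  intro η hη hηδ
  set δ := ⨅ γ : Γ, ‖T (stdUnitVector 𝕜 γ)‖ with hδdef
  have hbdd : BddBelow (Set.range fun γ : Γ => ‖T (stdUnitVector 𝕜 γ)‖) := by
    refine ⟨0, ?_⟩
    rintro _ ⟨γ, rfl⟩
    positivity
  have hδle : ∀ γ : Γ, δ ≤ ‖T (stdUnitVector 𝕜 γ)‖ := fun γ => ciInf_le hbdd γ
  have hTne : ∀ γ : Γ, T (stdUnitVector 𝕜 γ) ≠ 0 := by
    intro γ h
    have := hδle γ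
    rw [h, norm_zero] at this
    linarith
  choose g hg1 hg2 using fun γ : Γ => exists_dual_vector 𝕜 _ (norm_ne_zero_iff.mpr (hTne γ))
  set f : Γ → (C₀(Γ, 𝕜) →L[𝕜] 𝕜) := fun γ => (g γ).comp T with hf
  have hfnorm : ∀ γ, ‖f γ‖ ≤ ‖T‖ := by
    intro γ
    calc ‖f γ‖ ≤ ‖g γ‖ * ‖T‖ := (g γ).opNorm_comp_le T
      _ = ‖T‖ := by rw [hg1 γ, one_mul]
  set a : Γ → Γ → ℝ≥0∞ := fun γ γ' => ENNReal.ofReal ‖f γ (stdUnitVector 𝕜 γ')‖ with ha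
  set ε : ℝ≥0∞ := ENNReal.ofReal (δ - η) with hε
  have hδη : 0 < δ - η := by linarith
  obtain ⟨k, hk⟩ := exists_nat_ge (‖T‖ / (δ - η))
  have hkT : ‖T‖ ≤ (k : ℝ) * (δ - η) := by
    rw [div_le_iff₀ hδη] at hk
    linarith
  have hbound : ∀ γ ∈ (Set.univ : Set Γ),
      ∑' γ' : (Set.univ \ {γ} : Set Γ), a γ γ' ≤ (k : ℕ) * ε := by
    intro γ _
    have h1 : ∑' γ' : (Set.univ \ {γ} : Set Γ), a γ γ' ≤ ∑' γ' : Γ, a γ γ' := by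
      refine le_trans (my_tsum_mono _ (Set.diff_subset)) ?_
      rw [tsum_univ]
    refine le_trans h1 ?_
    have h2 : ∑' γ' : Γ, a γ γ' ≤ ENNReal.ofReal ‖T‖ := by
      rw [ENNReal.tsum_eq_iSup_sum]
      refine iSup_le fun F => ?_
      rw [ha]
      rw [← ENNReal.ofReal_sum_of_nonneg (fun _ _ => norm_nonneg _)]
      exact ENNReal.ofReal_le_ofReal (le_trans (l1_bound (f γ) F) (hfnorm γ))
    refine le_trans h2 ?_
    calc ENNReal.ofReal ‖T‖ ≤ ENNReal.ofReal ((k : ℝ) * (δ - η)) := ENNReal.ofReal_le_ofReal hkT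
      _ = (k : ℝ≥0∞) * ε := by
        rw [hε, ENNReal.ofReal_mul (by positivity), ENNReal.ofReal_natCast]
  obtain ⟨C, -, hCcard, hCsum⟩ := comb a ε (by simp [hε]) k Set.univ (by simp) hbound
  refine ⟨C, hCcard, ?_⟩
  -- the key estimate on the span
  have hkey : ∀ y ∈ Submodule.span 𝕜 ((fun γ : Γ => stdUnitVector 𝕜 γ) '' C),
      η * ‖y‖ ≤ ‖T y‖ := by
    have hrep : ∀ y ∈ Submodule.span 𝕜 ((fun γ : Γ => stdUnitVector 𝕜 γ) '' C),
        ∃ F : Finset Γ, ↑F ⊆ C ∧ ∃ c : Γ → 𝕜, y = ∑ γ ∈ F, c γ • stdUnitVector 𝕜 γ := by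
      intro y hy
      induction hy using Submodule.span_induction with
      | mem z hz =>
        obtain ⟨γ, hγ, rfl⟩ := hz
        exact ⟨{γ}, by simpa using hγ, fun _ => 1, by simp⟩
      | zero => exact ⟨∅, by simp, fun _ => 0, by simp⟩
      | add y z _ _ hy hz =>
        obtain ⟨F, hF, c, rfl⟩ := hy
        obtain ⟨F', hF', c', rfl⟩ := hz
        refine ⟨F ∪ F', by rw [Finset.coe_union]; exact Set.union_subset hF hF',
          fun γ => (if γ ∈ F then c γ else 0) + (if γ ∈ F' then c' γ else 0), ?_⟩
        have e1 : ∑ γ ∈ F ∪ F', (if γ ∈ F then c γ else 0) • stdUnitVector 𝕜 γ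
            = ∑ γ ∈ F, c γ • stdUnitVector 𝕜 γ := by
          rw [← Finset.sum_subset Finset.subset_union_left
            (fun γ _ hγ => by rw [if_neg hγ, zero_smul])]
          exact Finset.sum_congr rfl fun γ hγ => by rw [if_pos hγ]
        have e2 : ∑ γ ∈ F ∪ F', (if γ ∈ F' then c' γ else 0) • stdUnitVector 𝕜 γ
            = ∑ γ ∈ F', c' γ • stdUnitVector 𝕜 γ := by
          rw [← Finset.sum_subset Finset.subset_union_right
            (fun γ _ hγ => by rw [if_neg hγ, zero_smul])]
          exact Finset.sum_congr rfl fun γ hγ => by rw [if_pos hγ]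
        rw [← e1, ← e2, ← Finset.sum_add_distrib]
        exact Finset.sum_congr rfl fun γ _ => (add_smul _ _ _).symm
      | smul t y _ hy =>
        obtain ⟨F, hF, c, rfl⟩ := hy
        refine ⟨F, hF, fun γ => t * c γ, ?_⟩
        rw [Finset.smul_sum]
        exact Finset.sum_congr rfl fun γ _ => (smul_smul t (c γ) _)
    intro y hy
    obtain ⟨F, hFC, c, hy'⟩ := hrep y hy
    by_cases hy0 : y = 0
    · rw [hy0]
      simp
    have hFne : F.Nonempty := by
      rcases Finset.eq_empty_or_nonempty F with h | h
      · exact absurd (by rw [hy', h, Finset.sum_empty]) hy0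
      · exact h
    obtain ⟨γ₀, hγ₀F, hγ₀max⟩ := F.exists_max_image (fun γ => ‖c γ‖) hFne
    have hγ₀C : γ₀ ∈ C := hFC hγ₀F
    have happ : ∀ β, y β = if β ∈ F then c β else 0 := fun β => by
      rw [hy']; exact sum_apply' F c β
    have hnormy : ‖y‖ = ‖c γ₀‖ := by
      refine le_antisymm (c0_norm_le y (norm_nonneg _) fun β => ?_) ?_
      · rw [happ β]
        split
        · exact hγ₀max β ‹_›
        · simp
      · have h := c0_apply_le_norm y γ₀
        rwa [happ γ₀, if_pos hγ₀F] at h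
    -- ‖f γ₀ y‖ ≤ ‖T y‖
    have hTy : ‖f γ₀ y‖ ≤ ‖T y‖ := by
      have h := (g γ₀).le_opNorm (T y)
      rw [hg1 γ₀, one_mul] at h
      exact h
    -- split
    have hsplit : f γ₀ y = c γ₀ * f γ₀ (stdUnitVector 𝕜 γ₀)
        + ∑ γ ∈ F.erase γ₀, c γ * f γ₀ (stdUnitVector 𝕜 γ) := by
      rw [hy', map_sum]
      simp only [map_smul, smul_eq_mul]
      exact (Finset.add_sum_erase F _ hγ₀F).symm
    have h1 : ‖c γ₀ * f γ₀ (stdUnitVector 𝕜 γ₀)‖ = ‖c γ₀‖ * ‖T (stdUnitVector 𝕜 γ₀)‖ := by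
      rw [norm_mul]
      congr 1
      have : f γ₀ (stdUnitVector 𝕜 γ₀) = (‖T (stdUnitVector 𝕜 γ₀)‖ : 𝕜) := hg2 γ₀
      rw [this, RCLike.norm_ofReal, abs_of_nonneg (norm_nonneg _)]
    have h2 : ∑ γ ∈ F.erase γ₀, ‖f γ₀ (stdUnitVector 𝕜 γ)‖ ≤ δ - η := by
      have hsub : ((F.erase γ₀ : Finset Γ) : Set Γ) ⊆ (C \ {γ₀} : Set Γ) := by
        intro γ hγ
        simp only [Finset.coe_erase, Set.mem_diff, Set.mem_singleton_iff] at hγ ⊢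
        exact ⟨hFC hγ.1, hγ.2⟩
      have hle : ∑ γ ∈ F.erase γ₀, a γ₀ γ ≤ ∑' γ' : (C \ {γ₀} : Set Γ), a γ₀ γ' := by
        rw [tsum_subtype]
        calc ∑ γ ∈ F.erase γ₀, a γ₀ γ
            = ∑ γ ∈ F.erase γ₀, (C \ {γ₀} : Set Γ).indicator (a γ₀) γ := by
              refine Finset.sum_congr rfl fun γ hγ => ?_
              rw [Set.indicator_of_mem (hsub hγ)]
          _ ≤ ∑' γ' : Γ, (C \ {γ₀} : Set Γ).indicator (a γ₀) γ' := ENNReal.sum_le_tsum _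
      have := le_trans hle (hCsum γ₀ hγ₀C)
      rw [ha] at this
      rw [← ENNReal.ofReal_sum_of_nonneg (fun _ _ => norm_nonneg _)] at this
      rw [hε] at this
      exact (ENNReal.ofReal_le_ofReal_iff hδη.le).mp this
    have h3 : ‖∑ γ ∈ F.erase γ₀, c γ * f γ₀ (stdUnitVector 𝕜 γ)‖ ≤ ‖c γ₀‖ * (δ - η) := by
      calc ‖∑ γ ∈ F.erase γ₀, c γ * f γ₀ (stdUnitVector 𝕜 γ)‖
          ≤ ∑ γ ∈ F.erase γ₀, ‖c γ * f γ₀ (stdUnitVector 𝕜 γ)‖ := norm_sum_le _ _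
        _ ≤ ∑ γ ∈ F.erase γ₀, ‖c γ₀‖ * ‖f γ₀ (stdUnitVector 𝕜 γ)‖ := by
            refine Finset.sum_le_sum fun γ hγ => ?_
            rw [norm_mul]
            exact mul_le_mul_of_nonneg_right (hγ₀max γ (Finset.mem_of_mem_erase hγ))
              (norm_nonneg _)
        _ = ‖c γ₀‖ * ∑ γ ∈ F.erase γ₀, ‖f γ₀ (stdUnitVector 𝕜 γ)‖ := by
            rw [Finset.mul_sum]
        _ ≤ ‖c γ₀‖ * (δ - η) := mul_le_mul_of_nonneg_left h2 (norm_nonneg _)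
    have h4 : ‖c γ₀‖ * ‖T (stdUnitVector 𝕜 γ₀)‖ - ‖c γ₀‖ * (δ - η) ≤ ‖f γ₀ y‖ := by
      have habs : ‖c γ₀ * f γ₀ (stdUnitVector 𝕜 γ₀)‖
          - ‖∑ γ ∈ F.erase γ₀, c γ * f γ₀ (stdUnitVector 𝕜 γ)‖ ≤ ‖f γ₀ y‖ := by
        rw [hsplit]
        have hns := norm_sub_norm_le (c γ₀ * f γ₀ (stdUnitVector 𝕜 γ₀))
            (c γ₀ * f γ₀ (stdUnitVector 𝕜 γ₀)
              + ∑ γ ∈ F.erase γ₀, c γ * f γ₀ (stdUnitVector 𝕜 γ))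
        have hsimp : c γ₀ * f γ₀ (stdUnitVector 𝕜 γ₀)
            - (c γ₀ * f γ₀ (stdUnitVector 𝕜 γ₀)
              + ∑ γ ∈ F.erase γ₀, c γ * f γ₀ (stdUnitVector 𝕜 γ))
            = -(∑ γ ∈ F.erase γ₀, c γ * f γ₀ (stdUnitVector 𝕜 γ)) := by ring
        rw [hsimp, norm_neg] at hns
        linarith
      rw [h1] at habs
      linarith
    have hprod : ‖c γ₀‖ * δ ≤ ‖c γ₀‖ * ‖T (stdUnitVector 𝕜 γ₀)‖ :=
      mul_le_mul_of_nonneg_left (hδle γ₀) (norm_nonneg _)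
    rw [hnormy]
    linarith [hprod, h4, hTy]
  -- pass to the closure
  intro x hx
  have hclosed : IsClosed {y : C₀(Γ, 𝕜) | η * ‖y‖ ≤ ‖T y‖} :=
    isClosed_le (continuous_const.mul continuous_norm) (T.continuous.norm)
  have hxc : x ∈ closure ((Submodule.span 𝕜
      ((fun γ : Γ => stdUnitVector 𝕜 γ) '' C) : Submodule 𝕜 C₀(Γ, 𝕜)) : Set C₀(Γ, 𝕜)) := by
    rw [← Submodule.topologicalClosure_coe]
    exact hx
  exact closure_minimal hkey hclosed hxc
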